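/- Fix 0 ∈ I and set θ(s) = ∫₀ˢ τ(u)du, and assume κ(s)cos θ(s) > 0 for all s ∈ I. Define the principal-donor curve γ_pdo of γ by γ_pdo′(s) = −cos θ(s)·N(s) + sin θ(s)·B(s). Then γ_pdo is a unit-speed curve whose curvature is κ_pdo(s) = κ(s)cos θ(s), whose torsion is τ_pdo(s) = κ(s)sin θ(s), and whose principal normal is N_pdo = T. -/

import Mathlib

open scoped RealInnerProductSpace

noncomputable def cross3 (x y : EuclideanSpace ℝ (Fin 3)) : EuclideanSpace ℝ (Fin 3) :=
  WithLp.toLp 2 ![x 1 * y 2 - x 2 * y 1, x 2 * y 0 - x 0 * y 2, x 0 * y 1 - x 1 * y 0]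

lemma cross3_aux (T N : EuclideanSpace ℝ (Fin 3)) (c s : ℝ)
    (hT : ⟪T, T⟫ = 1) (hTN : ⟪T, N⟫ = 0) :
    c • cross3 T N + s • N =
      cross3 ((-c) • N + s • cross3 T N) T := by
  simp only [PiLp.inner_apply, RCLike.inner_apply, starRingEnd_apply, star_trivial,
    Fin.sum_univ_three] at hT hTN
  ext i
  fin_cases i <;> simp [cross3]
  · linear_combination (-(s * N 0)) * hT + (s * T 0) * hTN
  · linear_combination (-(s * N 1)) * hT + (s * T 1) * hTN
  · linear_combination (-(s * N 2)) * hT + (s * T 2) * hTN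

/-- With θ(s) = ∫₀ˢ τ and κ cos θ > 0 on I, the principal-donor curve
γ_pdo (γ_pdo' = -cos θ·N + sin θ·B) is unit speed with curvature κ cos θ, torsion
κ sin θ, and principal normal T. -/
theorem stmt_18 (a b : ℝ) (γ T N B : ℝ → EuclideanSpace ℝ (Fin 3)) (κ τ : ℝ → ℝ)
    (hγT : ∀ s ∈ Set.Ioo a b, HasDerivAt γ (T s) s)
    (hT1 : ∀ s ∈ Set.Ioo a b, ‖T s‖ = 1)
    (hN1 : ∀ s ∈ Set.Ioo a b, ‖N s‖ = 1)
    (hB1 : ∀ s ∈ Set.Ioo a b, ‖B s‖ = 1)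
    (hTN : ∀ s ∈ Set.Ioo a b, ⟪T s, N s⟫ = 0)
    (hTB : ∀ s ∈ Set.Ioo a b, ⟪T s, B s⟫ = 0)
    (hNB : ∀ s ∈ Set.Ioo a b, ⟪N s, B s⟫ = 0)
    (horient : ∀ s ∈ Set.Ioo a b, B s = cross3 (T s) (N s))
    (hκpos : ∀ s ∈ Set.Ioo a b, 0 < κ s)
    (hTder : ∀ s ∈ Set.Ioo a b, HasDerivAt T (κ s • N s) s)
    (hNder : ∀ s ∈ Set.Ioo a b, HasDerivAt N ((-κ s) • T s + τ s • B s) s)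
    (hBder : ∀ s ∈ Set.Ioo a b, HasDerivAt B ((-τ s) • N s) s)
    (h0 : (0:ℝ) ∈ Set.Ioo a b) (hτcont : ContinuousOn τ (Set.Ioo a b))
    (hpos : ∀ s ∈ Set.Ioo a b, 0 < κ s * Real.cos (∫ t in (0:ℝ)..s, τ t))
    (γpdo : ℝ → EuclideanSpace ℝ (Fin 3))
    (hγpdo : ∀ s ∈ Set.Ioo a b, HasDerivAt γpdo
      ((-Real.cos (∫ t in (0:ℝ)..s, τ t)) • N s +
        Real.sin (∫ t in (0:ℝ)..s, τ t) • B s) s) :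
    ∀ s ∈ Set.Ioo a b,
      ‖(-Real.cos (∫ t in (0:ℝ)..s, τ t)) • N s +
          Real.sin (∫ t in (0:ℝ)..s, τ t) • B s‖ = 1 ∧
      HasDerivAt (fun r => (-Real.cos (∫ t in (0:ℝ)..r, τ t)) • N r +
          Real.sin (∫ t in (0:ℝ)..r, τ t) • B r)
        ((κ s * Real.cos (∫ t in (0:ℝ)..s, τ t)) • T s) s ∧
      Real.cos (∫ t in (0:ℝ)..s, τ t) • B s + Real.sin (∫ t in (0:ℝ)..s, τ t) • N s =
        cross3 ((-Real.cos (∫ t in (0:ℝ)..s, τ t)) • N s +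
          Real.sin (∫ t in (0:ℝ)..s, τ t) • B s) (T s) ∧
      HasDerivAt (fun r => Real.cos (∫ t in (0:ℝ)..r, τ t) • B r +
          Real.sin (∫ t in (0:ℝ)..r, τ t) • N r)
        ((-(κ s * Real.sin (∫ t in (0:ℝ)..s, τ t))) • T s) s := by
  intro s hs
  have hθ : HasDerivAt (fun r => ∫ t in (0:ℝ)..r, τ t) (τ s) s := by
    apply intervalIntegral.integral_hasDerivAt_right
    · exact (hτcont.mono ((Set.ordConnected_Ioo).uIcc_subset h0 hs)).intervalIntegrable
    · exact hτcont.stronglyMeasurableAtFilter isOpen_Ioo s hs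
    · exact hτcont.continuousAt (Ioo_mem_nhds hs.1 hs.2)
  have hNN : ⟪N s, N s⟫ = 1 := by
    rw [real_inner_self_eq_norm_mul_norm, hN1 s hs]; norm_num
  have hBB : ⟪B s, B s⟫ = 1 := by
    rw [real_inner_self_eq_norm_mul_norm, hB1 s hs]; norm_num
  have hTT : ⟪T s, T s⟫ = 1 := by
    rw [real_inner_self_eq_norm_mul_norm, hT1 s hs]; norm_num
  refine ⟨?_, ?_, ?_, ?_⟩
  · have key : ⟪(-Real.cos (∫ t in (0:ℝ)..s, τ t)) • N s +
        Real.sin (∫ t in (0:ℝ)..s, τ t) • B s,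
        (-Real.cos (∫ t in (0:ℝ)..s, τ t)) • N s +
        Real.sin (∫ t in (0:ℝ)..s, τ t) • B s⟫ = 1 := by
      rw [real_inner_add_add_self]
      simp only [real_inner_smul_left, real_inner_smul_right, hNN, hBB, hNB s hs]
      ring_nf
      nlinarith [Real.sin_sq_add_cos_sq (∫ t in (0:ℝ)..s, τ t)]
    have h2 := real_inner_self_eq_norm_sq ((-Real.cos (∫ t in (0:ℝ)..s, τ t)) • N s +
        Real.sin (∫ t in (0:ℝ)..s, τ t) • B s)
    rw [key] at h2
    nlinarith [norm_nonneg ((-Real.cos (∫ t in (0:ℝ)..s, τ t)) • N s +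
        Real.sin (∫ t in (0:ℝ)..s, τ t) • B s)]
  · have h := ((hθ.cos.neg).smul (hNder s hs)).add ((hθ.sin).smul (hBder s hs))
    refine h.congr_deriv ?_
    simp only [Pi.neg_apply]
    module
  · rw [horient s hs]
    exact cross3_aux (T s) (N s) _ _ hTT (hTN s hs)
  · have h := ((hθ.cos).smul (hBder s hs)).add ((hθ.sin).smul (hNder s hs))
    refine h.congr_deriv ?_
    module
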